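/- Let f1(x; μ, τ) be the lognormal density with parameters μ ∈ ℝ, τ > 0, and f2(x; λ, κ) the Weibull density with parameters λ, κ > 0. Then for every μ ∈ ℝ and τ > 0, the infimum over (λ, κ) ∈ (0, ∞)² of D_KL(f1(·; μ, τ) ‖ f2(·; λ, κ)) equals 1 − (1/2) log(2π), it is attained at κ = √τ and λ = exp(μ + 1/(2√τ)), and in particular the infimum does not depend on (μ, τ). -/

import Mathlib

open MeasureTheory Real

/-- Kullback--Leibler divergence between two densities on `(0, ∞)` (i.e. `∫₀^∞`). -/
noncomputable def klDivPos (f g : ℝ → ℝ) : ℝ :=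
  ∫ x in Set.Ioi (0:ℝ), f x * Real.log (f x / g x)

/-- Lognormal density with log-scale `μ` and precision-type parameter `τ`. -/
noncomputable def lognormalPdf (μ τ : ℝ) (x : ℝ) : ℝ :=
  (1 / x) * Real.sqrt (τ / (2 * Real.pi)) * Real.exp (-(τ * (Real.log x - μ) ^ 2) / 2)

/-- Weibull density with scale `λ` and shape `κ` (real powers). -/
noncomputable def weibullPdf (lam κ : ℝ) (x : ℝ) : ℝ :=
  (κ / lam) * (x / lam) ^ (κ - 1) * Real.exp (-((x / lam) ^ κ))


lemma integral_Ioi_eq_integral_exp (F : ℝ → ℝ) :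
    ∫ x in Set.Ioi (0:ℝ), F x = ∫ y : ℝ, Real.exp y * F (Real.exp y) := by
  have h := integral_image_eq_integral_abs_deriv_smul (s := (Set.univ : Set ℝ))
    (f := Real.exp) (f' := Real.exp) MeasurableSet.univ
    (fun x _ => (Real.hasDerivAt_exp x).hasDerivWithinAt)
    (Real.exp_injective.injOn) F
  rw [Set.image_univ, Real.range_exp] at h
  rw [h, MeasureTheory.setIntegral_univ]
  congr 1
  funext y
  rw [abs_of_pos (Real.exp_pos y), smul_eq_mul]

lemma gauss_I1 {b : ℝ} (hb : 0 < b) : ∫ z : ℝ, z * Real.exp (-b * z ^ 2) = 0 := by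
  have hint : Integrable (fun z : ℝ => z * Real.exp (-b * z ^ 2)) :=
    integrable_mul_exp_neg_mul_sq hb
  have hsplit : (∫ z : ℝ, z * Real.exp (-b * z ^ 2)) =
      (∫ z in Set.Iic (0:ℝ), z * Real.exp (-b * z ^ 2)) +
        ∫ z in Set.Ioi (0:ℝ), z * Real.exp (-b * z ^ 2) := by
    rw [← setIntegral_union (Set.Iic_disjoint_Ioi le_rfl) measurableSet_Ioi
      hint.integrableOn hint.integrableOn, Set.Iic_union_Ioi,
      MeasureTheory.setIntegral_univ]
  have hneg : (∫ z in Set.Iic (0:ℝ), z * Real.exp (-b * z ^ 2)) =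
      - ∫ z in Set.Ioi (0:ℝ), z * Real.exp (-b * z ^ 2) := by
    have h1 : (∫ z in Set.Iic (0:ℝ), z * Real.exp (-b * z ^ 2)) =
        ∫ z in Set.Iic (0:ℝ), -((-z) * Real.exp (-b * (-z) ^ 2)) := by
      congr 1; funext z; rw [neg_sq]; ring
    rw [h1, MeasureTheory.integral_neg]
    congr 1
    have := integral_comp_neg_Iic (0:ℝ) (fun z => z * Real.exp (-b * z ^ 2))
    rw [neg_zero] at this
    exact this
  linarith [hsplit, hneg]

lemma gauss_I2 {b : ℝ} (hb : 0 < b) :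
    ∫ z : ℝ, z ^ 2 * Real.exp (-b * z ^ 2) = Real.sqrt (π / b) / (2 * b) := by
  have habs : (fun z : ℝ => z ^ 2 * Real.exp (-b * z ^ 2)) =
      (fun z : ℝ => |z| ^ 2 * Real.exp (-b * |z| ^ 2)) := by
    funext z; rw [sq_abs]
  rw [habs, integral_comp_abs (f := fun x : ℝ => x ^ 2 * Real.exp (-b * x ^ 2))]
  have h2 : (∫ x in Set.Ioi (0:ℝ), x ^ 2 * Real.exp (-b * x ^ 2)) =
      ∫ x in Set.Ioi (0:ℝ), x ^ (2:ℝ) * Real.exp (-b * x ^ (2:ℝ)) := by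
    simp_rw [Real.rpow_two]
  rw [h2, integral_rpow_mul_exp_neg_mul_rpow two_pos (by norm_num : (-1:ℝ) < 2) hb]
  have hG : Real.Gamma (((2:ℝ) + 1) / 2) = Real.sqrt π / 2 := by
    rw [show ((2:ℝ) + 1) / 2 = 1 / 2 + 1 by norm_num,
      Real.Gamma_add_one (by norm_num), Real.Gamma_one_half_eq]
    ring
  rw [hG]
  have hsb : (0:ℝ) < Real.sqrt b := Real.sqrt_pos.mpr hb
  have hbr : (b : ℝ) ^ (-((2:ℝ) + 1) / 2) = 1 / (b * Real.sqrt b) := by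
    rw [show (-((2:ℝ) + 1) / 2 : ℝ) = -(1 + 1/2) by norm_num, Real.rpow_neg hb.le,
      Real.rpow_add hb, Real.rpow_one, ← Real.sqrt_eq_rpow]
    rw [one_div]
  rw [hbr, Real.sqrt_div pi_pos.le]
  have hss : Real.sqrt b * Real.sqrt b = b := Real.mul_self_sqrt hb.le
  field_simp

lemma exp_tilt_eq {b : ℝ} (hb : 0 < b) (κ : ℝ) :
    (fun z : ℝ => Real.exp (κ * z) * Real.exp (-b * z ^ 2)) =
      fun z : ℝ => Real.exp (κ ^ 2 / (4 * b)) * Real.exp (-b * (z - κ / (2 * b)) ^ 2) := by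
  funext z
  rw [← Real.exp_add, ← Real.exp_add]
  congr 1
  field_simp
  ring

lemma integrable_exp_tilt {b : ℝ} (hb : 0 < b) (κ : ℝ) :
    Integrable (fun z : ℝ => Real.exp (κ * z) * Real.exp (-b * z ^ 2)) := by
  rw [exp_tilt_eq hb κ]
  exact ((integrable_exp_neg_mul_sq hb).comp_sub_right (κ / (2 * b))).const_mul _

lemma gauss_I4 {b : ℝ} (hb : 0 < b) (κ : ℝ) :
    ∫ z : ℝ, Real.exp (κ * z) * Real.exp (-b * z ^ 2) =
      Real.exp (κ ^ 2 / (4 * b)) * Real.sqrt (π / b) := by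
  rw [exp_tilt_eq hb κ, MeasureTheory.integral_const_mul]
  congr 1
  have : (∫ z : ℝ, Real.exp (-b * (z - κ / (2 * b)) ^ 2)) =
      ∫ z : ℝ, Real.exp (-b * z ^ 2) := by
    simp_rw [sub_eq_add_neg]
    exact MeasureTheory.integral_add_right_eq_self (fun z => Real.exp (-b * z ^ 2)) _
  rw [this, integral_gaussian]

lemma kl_eq (μ τ lam κ : ℝ) (hτ : 0 < τ) (hlam : 0 < lam) (hκ : 0 < κ) :
    klDivPos (lognormalPdf μ τ) (weibullPdf lam κ) =
      (1/2) * Real.log (τ / (2*π)) - Real.log κ + κ * (Real.log lam - μ) - 1/2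
        + Real.exp (-(κ * (Real.log lam - μ)) + κ^2 / (2*τ)) := by
  have hπ : (0:ℝ) < π := pi_pos
  have hb : (0:ℝ) < τ/2 := by linarith
  set c := Real.sqrt (τ / (2*π)) with hcdef
  have hc0 : 0 < c := Real.sqrt_pos.mpr (by positivity)
  set ll := Real.log lam with hll
  set A := (1/2) * Real.log (τ/(2*π)) - Real.log κ + κ * ll with hA
  have hpt : ∀ y : ℝ, Real.exp y * (lognormalPdf μ τ (Real.exp y) *
        Real.log (lognormalPdf μ τ (Real.exp y) / weibullPdf lam κ (Real.exp y))) =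
      c * Real.exp (-(τ/2) * (y - μ)^2) *
        (A - (τ/2) * (y - μ)^2 - κ * y + Real.exp (κ * (y - ll))) := by
    intro y
    have hdiv : Real.exp y / lam = Real.exp (y - ll) := by
      rw [Real.exp_sub, hll, Real.exp_log hlam]
    have hf : lognormalPdf μ τ (Real.exp y) =
        (1 / Real.exp y) * (c * Real.exp (-(τ/2) * (y - μ)^2)) := by
      unfold lognormalPdf
      rw [Real.log_exp, show -(τ * (y - μ)^2)/2 = -(τ/2) * (y - μ)^2 by ring]
      ring
    have hrp1 : (Real.exp y / lam) ^ (κ - 1) = Real.exp ((κ - 1) * (y - ll)) := by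
      rw [hdiv, Real.rpow_def_of_pos (Real.exp_pos _), Real.log_exp, mul_comm]
    have hrp2 : (Real.exp y / lam) ^ κ = Real.exp (κ * (y - ll)) := by
      rw [hdiv, Real.rpow_def_of_pos (Real.exp_pos _), Real.log_exp, mul_comm]
    have hg : weibullPdf lam κ (Real.exp y) =
        κ / lam * Real.exp ((κ - 1) * (y - ll)) * Real.exp (-(Real.exp (κ * (y - ll)))) := by
      unfold weibullPdf
      rw [hrp1, hrp2]
    have hfpos : 0 < lognormalPdf μ τ (Real.exp y) := by rw [hf]; positivity
    have hgpos : 0 < weibullPdf lam κ (Real.exp y) := by rw [hg]; positivity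
    have hlogf : Real.log ((1 / Real.exp y) * (c * Real.exp (-(τ/2) * (y - μ)^2))) =
        -y + Real.log (τ/(2*π)) / 2 + (-(τ/2) * (y - μ)^2) := by
      rw [Real.log_mul (by positivity) (by positivity),
          Real.log_mul hc0.ne' (Real.exp_ne_zero _), one_div, Real.log_inv, Real.log_exp,
          Real.log_exp, hcdef, Real.log_sqrt (by positivity)]
      ring
    have hlogg : Real.log (κ / lam * Real.exp ((κ - 1) * (y - ll)) *
          Real.exp (-(Real.exp (κ * (y - ll))))) =
        Real.log κ - ll + (κ - 1) * (y - ll) - Real.exp (κ * (y - ll)) := by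
      rw [Real.log_mul (by positivity) (Real.exp_ne_zero _),
          Real.log_mul (by positivity) (Real.exp_ne_zero _),
          Real.log_div hκ.ne' hlam.ne', Real.log_exp, Real.log_exp, hll]
      ring
    rw [Real.log_div hfpos.ne' hgpos.ne', hf, hg, hlogf, hlogg, hA]
    field_simp
    ring
  calc klDivPos (lognormalPdf μ τ) (weibullPdf lam κ)
      = ∫ y : ℝ, Real.exp y * (lognormalPdf μ τ (Real.exp y) *
          Real.log (lognormalPdf μ τ (Real.exp y) / weibullPdf lam κ (Real.exp y))) :=
        integral_Ioi_eq_integral_exp _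
    _ = ∫ y : ℝ, c * Real.exp (-(τ/2) * (y - μ)^2) *
          (A - (τ/2) * (y - μ)^2 - κ * y + Real.exp (κ * (y - ll))) :=
        integral_congr_ae (Filter.Eventually.of_forall hpt)
    _ = ∫ z : ℝ, c * Real.exp (-(τ/2) * z^2) *
          (A - (τ/2) * z^2 - κ * (z + μ) + Real.exp (κ * (z + μ - ll))) := by
        rw [← MeasureTheory.integral_add_right_eq_self (fun y => c * Real.exp (-(τ/2) * (y - μ)^2) *
          (A - (τ/2) * (y - μ)^2 - κ * y + Real.exp (κ * (y - ll)))) μ]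
        simp only [add_sub_cancel_right]
    _ = ∫ z : ℝ, c * ((A - κ*μ) * Real.exp (-(τ/2) * z^2)
          - (τ/2) * (z^2 * Real.exp (-(τ/2) * z^2))
          - κ * (z * Real.exp (-(τ/2) * z^2))
          + Real.exp (κ*(μ - ll)) * (Real.exp (κ*z) * Real.exp (-(τ/2) * z^2))) := by
        congr 1; funext z
        rw [show κ * (z + μ - ll) = κ*z + κ*(μ - ll) by ring, Real.exp_add]
        ring
    _ = c * ((A - κ*μ) * Real.sqrt (π/(τ/2))
          - (τ/2) * (Real.sqrt (π/(τ/2)) / (2*(τ/2)))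
          - κ * 0
          + Real.exp (κ*(μ - ll)) * (Real.exp (κ^2/(4*(τ/2))) * Real.sqrt (π/(τ/2)))) := by
        rw [MeasureTheory.integral_const_mul]
        congr 1
        have i0 := integrable_exp_neg_mul_sq hb
        have i1 := integrable_mul_exp_neg_mul_sq hb
        have i2 : Integrable (fun z : ℝ => z^2 * Real.exp (-(τ/2) * z^2)) := by
          have := integrable_rpow_mul_exp_neg_mul_sq hb (s := 2) (by norm_num)
          simpa [Real.rpow_two] using this
        have i4 : Integrable (fun z : ℝ =>
            Real.exp (κ*(μ - ll)) * (Real.exp (κ*z) * Real.exp (-(τ/2) * z^2))) :=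
          (integrable_exp_tilt hb κ).const_mul _
        have iA : Integrable (fun z : ℝ => (A - κ*μ) * Real.exp (-(τ/2) * z^2)) :=
          i0.const_mul _
        have iB : Integrable (fun z : ℝ => (τ/2) * (z^2 * Real.exp (-(τ/2) * z^2))) :=
          i2.const_mul _
        have iC : Integrable (fun z : ℝ => κ * (z * Real.exp (-(τ/2) * z^2))) :=
          i1.const_mul _
        have iAB : Integrable (fun z : ℝ => (A - κ*μ) * Real.exp (-(τ/2) * z^2)
            - (τ/2) * (z^2 * Real.exp (-(τ/2) * z^2))) := iA.sub iB
        have iABC : Integrable (fun z : ℝ => (A - κ*μ) * Real.exp (-(τ/2) * z^2)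
            - (τ/2) * (z^2 * Real.exp (-(τ/2) * z^2))
            - κ * (z * Real.exp (-(τ/2) * z^2))) := iAB.sub iC
        rw [integral_add iABC i4, integral_sub iAB iC, integral_sub iA iB,
            MeasureTheory.integral_const_mul, MeasureTheory.integral_const_mul,
            MeasureTheory.integral_const_mul, MeasureTheory.integral_const_mul,
            integral_gaussian, gauss_I1 hb, gauss_I2 hb, gauss_I4 hb κ]
    _ = (1/2) * Real.log (τ / (2*π)) - Real.log κ + κ * (ll - μ) - 1/2
        + Real.exp (-(κ * (ll - μ)) + κ^2 / (2*τ)) := by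
        have hcs : c * Real.sqrt (π/(τ/2)) = 1 := by
          rw [hcdef, ← Real.sqrt_mul (by positivity)]
          rw [show τ/(2*π) * (π/(τ/2)) = 1 by field_simp]
          exact Real.sqrt_one
        have hexp : Real.exp (κ*(μ - ll)) * Real.exp (κ^2/(4*(τ/2))) =
            Real.exp (-(κ * (ll - μ)) + κ^2 / (2*τ)) := by
          rw [← Real.exp_add]; congr 1; field_simp; ring
        rw [show (τ/2) * (Real.sqrt (π/(τ/2)) / (2*(τ/2))) = Real.sqrt (π/(τ/2)) / 2 by
          rw [show 2*(τ/2) = τ by ring]; field_simp]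
        rw [show c * ((A - κ*μ) * Real.sqrt (π/(τ/2)) - Real.sqrt (π/(τ/2)) / 2 - κ * 0
              + Real.exp (κ*(μ - ll)) * (Real.exp (κ^2/(4*(τ/2))) * Real.sqrt (π/(τ/2))))
            = (A - κ*μ - 1/2 + Real.exp (κ*(μ - ll)) * Real.exp (κ^2/(4*(τ/2))))
                * (c * Real.sqrt (π/(τ/2))) by ring,
          hcs, mul_one, hexp, hA]
        ring

/-- for every `μ ∈ ℝ` and `τ > 0`, the infimum over `(λ, κ) ∈ (0, ∞)²` of
`D_KL(lognormal(μ, τ) ‖ Weibull(λ, κ))` equals `1 − (1/2) log(2π)` (hence does not depend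
on `(μ, τ)`), and it is attained at `κ = √τ`, `λ = exp(μ + 1/(2√τ))`. -/
theorem inf_kl_lognormal_weibull (μ τ : ℝ) (hτ : 0 < τ) :
    sInf {d : ℝ | ∃ lam κ : ℝ, 0 < lam ∧ 0 < κ ∧
          d = klDivPos (lognormalPdf μ τ) (weibullPdf lam κ)} =
        1 - (1 / 2) * Real.log (2 * Real.pi) ∧
      klDivPos (lognormalPdf μ τ)
          (weibullPdf (Real.exp (μ + 1 / (2 * Real.sqrt τ))) (Real.sqrt τ)) =
        1 - (1 / 2) * Real.log (2 * Real.pi) := by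
  have hπ : (0:ℝ) < π := pi_pos
  have hsτ : 0 < Real.sqrt τ := Real.sqrt_pos.mpr hτ
  have h4 : Real.log (τ/(2*π)) = Real.log τ - Real.log (2*π) :=
    Real.log_div hτ.ne' (by positivity)
  have hval : klDivPos (lognormalPdf μ τ)
      (weibullPdf (Real.exp (μ + 1 / (2 * Real.sqrt τ))) (Real.sqrt τ)) =
      1 - (1 / 2) * Real.log (2 * Real.pi) := by
    rw [kl_eq μ τ _ _ hτ (Real.exp_pos _) hsτ, Real.log_exp,
      Real.log_sqrt hτ.le, Real.sq_sqrt hτ.le]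
    rw [show Real.sqrt τ * (μ + 1 / (2 * Real.sqrt τ) - μ) = 1/2 by field_simp; ring]
    rw [show -(1/2 : ℝ) + τ / (2*τ) = 0 by field_simp; ring, Real.exp_zero, h4]
    ring
  have hlb : ∀ d ∈ {d : ℝ | ∃ lam κ : ℝ, 0 < lam ∧ 0 < κ ∧
      d = klDivPos (lognormalPdf μ τ) (weibullPdf lam κ)},
      1 - (1 / 2) * Real.log (2 * Real.pi) ≤ d := by
    rintro d ⟨lam, κ, hlam, hκ, rfl⟩
    rw [kl_eq μ τ lam κ hτ hlam hκ]
    have h1 : Real.log (κ^2/τ) ≤ κ^2/τ - 1 := Real.log_le_sub_one_of_pos (by positivity)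
    have h2 : (-(κ * (Real.log lam - μ)) + κ^2 / (2*τ)) + 1 ≤
        Real.exp (-(κ * (Real.log lam - μ)) + κ^2 / (2*τ)) := Real.add_one_le_exp _
    have h3 : Real.log (κ^2/τ) = 2 * Real.log κ - Real.log τ := by
      rw [Real.log_div (by positivity) hτ.ne', Real.log_pow]
      push_cast; ring
    have h5 : κ^2 / (2*τ) = (κ^2/τ) / 2 := by ring
    linarith
  have hmem : (1 - (1 / 2) * Real.log (2 * Real.pi)) ∈ {d : ℝ | ∃ lam κ : ℝ, 0 < lam ∧ 0 < κ ∧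
      d = klDivPos (lognormalPdf μ τ) (weibullPdf lam κ)} :=
    ⟨_, _, Real.exp_pos _, hsτ, hval.symm⟩
  exact ⟨le_antisymm (csInf_le ⟨_, hlb⟩ hmem) (le_csInf ⟨_, hmem⟩ hlb), hval⟩
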